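/- For a nonnegative compact self-adjoint operator B and a bounded operator A on a Hilbert space, and any e > 0, the number of eigenvalues ≥ e of A B A* equals the number of eigenvalues ≥ e of B^{1/2} A* A B^{1/2}. -/

import Mathlib

open ContinuousLinearMap

/-- The number of eigenvalues `≥ μ` of an operator, counted with multiplicity
(as a cardinal). -/
noncomputable def eigCount {H : Type*} [NormedAddCommGroup H] [InnerProductSpace ℂ H]
    (A : H →L[ℂ] H) (μ : ℝ) : Cardinal :=
  Cardinal.sum fun r : {r : ℝ // μ ≤ r} =>
    Module.rank ℂ (Module.End.eigenspace (A : H →ₗ[ℂ] H) ((r : ℝ) : ℂ))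

lemma rank_eig_le {H : Type*} [NormedAddCommGroup H] [InnerProductSpace ℂ H] [CompleteSpace H]
    (T : H →L[ℂ] H) (μ : ℂ) (hμ : μ ≠ 0) :
    Module.rank ℂ (Module.End.eigenspace ((T ∘L adjoint T : H →L[ℂ] H) : H →ₗ[ℂ] H) μ) ≤
    Module.rank ℂ (Module.End.eigenspace ((adjoint T ∘L T : H →L[ℂ] H) : H →ₗ[ℂ] H) μ) := by
  set E₁ := Module.End.eigenspace ((T ∘L adjoint T : H →L[ℂ] H) : H →ₗ[ℂ] H) μ
  set E₂ := Module.End.eigenspace ((adjoint T ∘L T : H →L[ℂ] H) : H →ₗ[ℂ] H) μ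
  have hmem : ∀ x : E₁, (adjoint T : H →ₗ[ℂ] H) (E₁.subtype x) ∈ E₂ := by
    intro x
    have hx : T (adjoint T x.1) = μ • (x.1 : H) := Module.End.mem_eigenspace_iff.mp x.2
    refine Module.End.mem_eigenspace_iff.mpr ?_
    show (adjoint T ∘L T) (adjoint T x.1) = μ • adjoint T x.1
    simp only [comp_apply, hx, map_smul]
  let g : E₁ →ₗ[ℂ] E₂ :=
    LinearMap.codRestrict E₂ ((adjoint T : H →ₗ[ℂ] H).comp E₁.subtype) hmem
  have hginj : Function.Injective g := by
    intro x y hxy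
    have h1 : adjoint T (x : H) = adjoint T (y : H) := congrArg Subtype.val hxy
    have hx : T (adjoint T x.1) = μ • (x.1 : H) := Module.End.mem_eigenspace_iff.mp x.2
    have hy : T (adjoint T y.1) = μ • (y.1 : H) := Module.End.mem_eigenspace_iff.mp y.2
    have : μ • (x.1 : H) = μ • (y.1 : H) := by rw [← hx, ← hy, h1]
    exact Subtype.ext (smul_right_injective H hμ this)
  exact LinearMap.rank_le_of_injective g hginj

lemma rank_eig_eq {H : Type*} [NormedAddCommGroup H] [InnerProductSpace ℂ H] [CompleteSpace H]
    (T : H →L[ℂ] H) (μ : ℂ) (hμ : μ ≠ 0) :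
    Module.rank ℂ (Module.End.eigenspace ((T ∘L adjoint T : H →L[ℂ] H) : H →ₗ[ℂ] H) μ) =
    Module.rank ℂ (Module.End.eigenspace ((adjoint T ∘L T : H →L[ℂ] H) : H →ₗ[ℂ] H) μ) := by
  refine le_antisymm (rank_eig_le T μ hμ) ?_
  have := rank_eig_le (adjoint T) μ hμ
  rwa [adjoint_adjoint] at this

/-- For a nonnegative compact self-adjoint operator `B`
(with nonnegative square root `S`, `S² = B`), a bounded operator `A`, and `e > 0`,
`n(A B A*, e) = n(B^{1/2} A* A B^{1/2}, e)`. -/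
theorem stmt4 {H : Type*} [NormedAddCommGroup H] [InnerProductSpace ℂ H] [CompleteSpace H]
    (A B S : H →L[ℂ] H) (e : ℝ) (he : 0 < e)
    (hB : B.IsPositive) (hcB : IsCompactOperator (⇑B))
    (hS : S.IsPositive) (hS2 : S ∘L S = B) :
    eigCount (A ∘L B ∘L adjoint A) e = eigCount (S ∘L adjoint A ∘L A ∘L S) e := by
  set T := A ∘L S with hT
  have hSadj : adjoint S = S := hS.isSelfAdjoint.adjoint_eq
  have h1 : A ∘L B ∘L adjoint A = T ∘L adjoint T := by
    rw [hT, adjoint_comp, hSadj, ← hS2]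
    ext x; simp [comp_apply]
  have h2 : S ∘L adjoint A ∘L A ∘L S = adjoint T ∘L T := by
    rw [hT, adjoint_comp, hSadj]
    ext x; simp [comp_apply]
  rw [h1, h2]
  unfold eigCount
  apply congrArg
  funext r
  have hr : ((r : ℝ) : ℂ) ≠ 0 := by
    have : (0 : ℝ) < (r : ℝ) := lt_of_lt_of_le he r.2
    exact_mod_cast this.ne'
  exact rank_eig_eq T _ hr
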